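/- Let F be a field, and let U and V be F-vector spaces of the same finite dimension p ≥ 1. Let x ∈ U be nonzero, and let S be a linear subspace of Hom(U,V) that contains every operator u with u(x) = 0. If S contains some operator u₀ with u₀(x) ≠ 0, then S contains a bijective operator. -/

import Mathlib

/-- Let `U, V` have the same finite dimension `p ≥ 1`, let `x ∈ U` be nonzero, and let
`S` be a linear subspace of `Hom(U,V)` containing every operator vanishing at `x`.
If `S` contains some operator not vanishing at `x`, then `S` contains a bijective
operator. -/
theorem contains_bijective_operator (F : Type*) [Field F]
    (U V : Type*) [AddCommGroup U] [Module F U] [AddCommGroup V] [Module F V]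
    [FiniteDimensional F U] [FiniteDimensional F V]
    (p : ℕ) (hp : 1 ≤ p) (hU : Module.finrank F U = p) (hV : Module.finrank F V = p)
    (x : U) (hx : x ≠ 0)
    (S : Submodule F (U →ₗ[F] V))
    (hall : ∀ u : U →ₗ[F] V, u x = 0 → u ∈ S)
    (hex : ∃ u₀ ∈ S, u₀ x ≠ 0) :
    ∃ u ∈ S, Function.Bijective u := by
  classical
  obtain ⟨u₀, hu₀S, hu₀x⟩ := hex
  set y : V := u₀ x with hy
  have hxli : LinearIndepOn F id ({x} : Set U) :=
    (linearIndepOn_singleton_iff F).mpr hx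
  have hyli : LinearIndepOn F id ({y} : Set V) :=
    (linearIndepOn_singleton_iff F).mpr hu₀x
  let bU : Module.Basis _ F U := Module.Basis.extend hxli
  let bV : Module.Basis _ F V := Module.Basis.extend hyli
  haveI := FiniteDimensional.fintypeBasisIndex bU
  haveI := FiniteDimensional.fintypeBasisIndex bV
  have hxmem : x ∈ hxli.extend (Set.subset_univ _) :=
    hxli.subset_extend _ (Set.mem_singleton x)
  have hymem : y ∈ hyli.extend (Set.subset_univ _) :=
    hyli.subset_extend _ (Set.mem_singleton y)
  have hcard : Fintype.card (hxli.extend (Set.subset_univ _)) =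
      Fintype.card (hyli.extend (Set.subset_univ _)) := by
    rw [← Module.finrank_eq_card_basis bU, ← Module.finrank_eq_card_basis bV, hU, hV]
  let e0 := Fintype.equivOfCardEq hcard
  let xi : hxli.extend (Set.subset_univ _) := ⟨x, hxmem⟩
  let yi : hyli.extend (Set.subset_univ _) := ⟨y, hymem⟩
  let e := e0.trans (Equiv.swap (e0 xi) yi)
  have hexy : e xi = yi := by simp [e]
  let u : U ≃ₗ[F] V := bU.equiv bV e
  have hux : u x = y := by
    have h1 : bU xi = x := Module.Basis.extend_apply_self hxli xi
    have h2 : bV yi = y := Module.Basis.extend_apply_self hyli yi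
    calc u x = u (bU xi) := by rw [h1]
    _ = bV (e xi) := Module.Basis.equiv_apply bU xi bV e
    _ = y := by rw [hexy, h2]
  have hdiff : (u₀ - (u : U →ₗ[F] V)) x = 0 := by
    simp [hux, ← hy]
  have hmem : (u : U →ₗ[F] V) ∈ S := by
    have : (u : U →ₗ[F] V) = u₀ - (u₀ - (u : U →ₗ[F] V)) := (sub_sub_cancel _ _).symm
    rw [this]
    exact S.sub_mem hu₀S (hall _ hdiff)
  exact ⟨u, hmem, u.bijective⟩
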